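/- Let $n > 2k > 0$, $q > k$, and let $\nu : \mathbb{R} \to \mathbb{R}$ be continuous. Suppose $(x,y) : (T_0, T) \to \mathbb{R}^2$ with $x, y > 0$ solves the system $\dot x = x(\nu(t) - x - qy)$, $\dot y = y(-\frac{n-2k}{k} + \frac{x}{k} + y)$, and that $\nu(t) < \frac{(n-2k)(q+1)}{k+1}$ for all $t$. Define $G(x,y) = x + \frac{(n-2k)(q+1)}{k+1}(\frac{k}{n-2k}y - 1)$. If $G(x(t_0), y(t_0)) \leq 0$ for some $t_0 \in (T_0,T)$, then $G(x(t), y(t)) < 0$ for all $t \in (t_0, T)$. -/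

import Mathlib

/-- Forward invariance of `G₋` for the non-autonomous Lotka-Volterra
system: if `(x,y)` is a positive solution on `(T₀,T)` of
`ẋ = x(ν(t) - x - qy)`, `ẏ = y(-(n-2k)/k + x/k + y)` with `ν(t) < (n-2k)(q+1)/(k+1)`,
and `G(x(t₀), y(t₀)) ≤ 0`, then `G(x(t), y(t)) < 0` for all `t ∈ (t₀, T)`. -/
theorem Gminus_invariance (n k q T0 T : ℝ) (hk : 0 < k) (hn : 2 * k < n) (hq : k < q)
    (ν : ℝ → ℝ) (hν_cont : Continuous ν)
    (hνb : ∀ t : ℝ, ν t < (n - 2 * k) * (q + 1) / (k + 1))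
    (x y : ℝ → ℝ)
    (hx : ∀ t ∈ Set.Ioo T0 T, HasDerivAt x (x t * (ν t - x t - q * y t)) t)
    (hy : ∀ t ∈ Set.Ioo T0 T, HasDerivAt y (y t * (-(n - 2 * k) / k + x t / k + y t)) t)
    (hxpos : ∀ t ∈ Set.Ioo T0 T, 0 < x t) (hypos : ∀ t ∈ Set.Ioo T0 T, 0 < y t)
    (G : ℝ → ℝ → ℝ)
    (hG : ∀ a b : ℝ, G a b = a + (n - 2 * k) * (q + 1) / (k + 1) * (k / (n - 2 * k) * b - 1))
    (t0 : ℝ) (ht0 : t0 ∈ Set.Ioo T0 T) (hG0 : G (x t0) (y t0) ≤ 0) :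
    ∀ t ∈ Set.Ioo t0 T, G (x t) (y t) < 0 := by
  intro t ht
  have hk0 : (k : ℝ) ≠ 0 := ne_of_gt hk
  have hnk : (0:ℝ) < n - 2 * k := by linarith
  have hnk0 : n - 2 * k ≠ 0 := ne_of_gt hnk
  have hk1 : k + 1 ≠ 0 := by positivity
  set C : ℝ := (n - 2 * k) * (q + 1) / (k + 1) with hCdef
  set c : ℝ := k / (n - 2 * k) with hcdef
  set D : Set ℝ := Set.Ioo T0 T with hDdef
  have htD : t ∈ D := ⟨lt_trans ht0.1 ht.1, ht.2⟩
  -- continuity of x and y on D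
  have hxc : ContinuousOn x D := fun s hs => ((hx s hs).continuousAt).continuousWithinAt
  have hyc : ContinuousOn y D := fun s hs => ((hy s hs).continuousAt).continuousWithinAt
  set f : ℝ → ℝ := fun s => y s - x s with hfdef
  have hfc : ContinuousOn f D := hyc.sub hxc
  set A : ℝ → ℝ := fun s => ∫ u in t0..s, f u with hAdef
  have hA : ∀ s ∈ D, HasDerivAt A (f s) s := by
    intro s hs
    have hsub : Set.uIcc t0 s ⊆ D := Set.OrdConnected.uIcc_subset Set.ordConnected_Ioo ht0 hs
    have hint : IntervalIntegrable f MeasureTheory.volume t0 s :=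
      (hfc.mono hsub).intervalIntegrable
    exact intervalIntegral.integral_hasDerivAt_right hint
      (hfc.stronglyMeasurableAtFilter isOpen_Ioo s hs)
      ((hfc s hs).continuousAt (isOpen_Ioo.mem_nhds hs))
  set g : ℝ → ℝ := fun s => x s + C * (c * y s - 1) with hgdef
  have hGg : ∀ s : ℝ, G (x s) (y s) = g s := fun s => hG (x s) (y s)
  have hg' : ∀ s ∈ D, HasDerivAt g (f s * g s + x s * (ν s - C)) s := by
    intro s hs
    have h1 : HasDerivAt (fun u => x u + C * (c * y u - 1))
        (x s * (ν s - x s - q * y s) + C * (c * (y s * (-(n - 2 * k) / k + x s / k + y s)))) s := by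
      exact (hx s hs).add ((((hy s hs).const_mul c).sub_const 1).const_mul C)
    convert h1 using 1
    simp only [hgdef, hfdef, hCdef, hcdef]
    field_simp
    ring
  set h : ℝ → ℝ := fun s => g s * Real.exp (-(A s)) with hhdef
  have hh' : ∀ s ∈ D, HasDerivAt h (x s * (ν s - C) * Real.exp (-(A s))) s := by
    intro s hs
    have he : HasDerivAt (fun u => Real.exp (-(A u))) (Real.exp (-(A s)) * -(f s)) s :=
      ((hA s hs).neg).exp
    have : HasDerivAt (fun u => g u * Real.exp (-(A u)))
        ((f s * g s + x s * (ν s - C)) * Real.exp (-(A s)) + g s * (Real.exp (-(A s)) * -(f s))) s :=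
      (hg' s hs).mul he
    convert this using 1
    ring
  have hanti : StrictAntiOn h D := by
    apply strictAntiOn_of_deriv_neg (convex_Ioo T0 T)
      (fun s hs => ((hh' s hs).continuousAt).continuousWithinAt)
    intro s hs
    rw [interior_Ioo] at hs
    rw [(hh' s hs).deriv]
    have h1 := hxpos s hs
    have h2 := hνb s
    have h3 := Real.exp_pos (-(A s))
    have : x s * (ν s - C) < 0 := mul_neg_of_pos_of_neg h1 (by linarith)
    exact mul_neg_of_neg_of_pos this h3
  have hlt : h t < h t0 := hanti ht0 htD ht.1
  have hA0 : A t0 = 0 := intervalIntegral.integral_same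
  have hht0 : h t0 = g t0 := by
    simp only [hhdef, hA0, neg_zero, Real.exp_zero, mul_one]
  have hg0 : g t0 ≤ 0 := by rw [← hGg]; exact hG0
  have hht : h t < 0 := by rw [hht0] at hlt; linarith
  have hexp := Real.exp_pos (-(A t))
  simp only [hhdef] at hht
  rw [hGg]
  by_contra hge
  exact absurd hht (not_lt.mpr (mul_nonneg (not_lt.mp hge) hexp.le))
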